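/- Let Λ' be a free ℤ-module with symmetric bilinear form (·,·) and let A₀, R, γ₀ ∈ Λ' satisfy (A₀,A₀) = 4, (R,R) = −2, (A₀,R) = 1, (γ₀,γ₀) = −2 and (γ₀,A₀) = 0. In the Mukai lattice M(Λ') set u₀ := (1, A₀ − R, 1) and s := (5, 2(2A₀ − R), 5). Then ⟨u₀,u₀⟩ = −2, the reflection r_{u₀} maps M(Λ') into M(Λ'), and if (γ₀,R) ≢ 0 (mod 5) then the integer ⟨r_{u₀}((0, γ₀, 0)), s⟩ is not divisible by 5. -/
import Mathlib


/-- The Mukai pairing `⟨(a,b,c),(a',b',c')⟩ = (b,b') − a·c' − c·a'` on `ℚ ⊕ V ⊕ ℚ`,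
the rationalization of the Mukai lattice `ℤ ⊕ Λ' ⊕ ℤ`. -/
def mukaiQ {V : Type*} [AddCommGroup V] [Module ℚ V]
    (B : V →ₗ[ℚ] V →ₗ[ℚ] ℚ) (p q : ℚ × V × ℚ) : ℚ :=
  B p.2.1 q.2.1 - p.1 * q.2.2 - p.2.2 * q.1

/-- The involution `r_γ(x) = −x + (2⟨x,γ⟩/⟨γ,γ⟩)·γ` of the rationalized Mukai lattice. -/
noncomputable def mukaiRefl {V : Type*} [AddCommGroup V] [Module ℚ V]
    (B : V →ₗ[ℚ] V →ₗ[ℚ] ℚ) (γ x : ℚ × V × ℚ) : ℚ × V × ℚ :=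
  -x + ((2 * mukaiQ B x γ) / mukaiQ B γ γ) • γ

/-- let `Λ'` be a lattice (realized as a `ℤ`-submodule `L` of a rational
quadratic space on which the form is `ℤ`-valued) containing `A₀, R, γ₀` with
`(A₀,A₀) = 4`, `(R,R) = −2`, `(A₀,R) = 1`, `(γ₀,γ₀) = −2`, `(γ₀,A₀) = 0`.  In the Mukai
lattice set `u₀ = (1, A₀−R, 1)` and `s = (5, 2(2A₀−R), 5)`.  Then `⟨u₀,u₀⟩ = −2`, the
reflection `r_{u₀}` maps the Mukai lattice `ℤ ⊕ Λ' ⊕ ℤ` into itself, and if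
`(γ₀,R) ≢ 0 (mod 5)` then the integer `⟨r_{u₀}((0,γ₀,0)), s⟩` is not divisible by 5. -/
theorem mukai_reflection_not_div_five
    (V : Type*) [AddCommGroup V] [Module ℚ V]
    (B : V →ₗ[ℚ] V →ₗ[ℚ] ℚ) (hsymm : ∀ x y : V, B x y = B y x)
    (L : Submodule ℤ V) [Module.Free ℤ (↥L)] [Module.Finite ℤ (↥L)]
    (hint : ∀ x ∈ L, ∀ y ∈ L, ∃ n : ℤ, B x y = (n : ℚ))
    (A₀ R γ₀ : V) (hA₀ : A₀ ∈ L) (hR : R ∈ L) (hγ₀ : γ₀ ∈ L)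
    (hAA : B A₀ A₀ = 4) (hRR : B R R = -2) (hAR : B A₀ R = 1)
    (hγγ : B γ₀ γ₀ = -2) (hγA : B γ₀ A₀ = 0)
    (h5 : ∀ n : ℤ, B γ₀ R = (n : ℚ) → ¬ (5 : ℤ) ∣ n) :
    mukaiQ B ((1 : ℚ), A₀ - R, (1 : ℚ)) ((1 : ℚ), A₀ - R, (1 : ℚ)) = -2 ∧
    (∀ p : ℚ × V × ℚ,
      (∃ a : ℤ, p.1 = (a : ℚ)) → p.2.1 ∈ L → (∃ c : ℤ, p.2.2 = (c : ℚ)) →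
      ((∃ a : ℤ, (mukaiRefl B ((1 : ℚ), A₀ - R, (1 : ℚ)) p).1 = (a : ℚ)) ∧
        (mukaiRefl B ((1 : ℚ), A₀ - R, (1 : ℚ)) p).2.1 ∈ L ∧
        (∃ c : ℤ, (mukaiRefl B ((1 : ℚ), A₀ - R, (1 : ℚ)) p).2.2 = (c : ℚ)))) ∧
    (∃ n : ℤ,
      mukaiQ B (mukaiRefl B ((1 : ℚ), A₀ - R, (1 : ℚ)) ((0 : ℚ), γ₀, (0 : ℚ)))
          ((5 : ℚ), (2 : ℚ) • ((2 : ℚ) • A₀ - R), (5 : ℚ)) = (n : ℚ) ∧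
        ¬ (5 : ℤ) ∣ n) := by
  obtain ⟨n, hn⟩ := hint γ₀ hγ₀ R hR
  have hRA : B R A₀ = 1 := (hsymm R A₀).trans hAR
  have hAγ : B A₀ γ₀ = 0 := (hsymm A₀ γ₀).trans hγA
  have hRγ : B R γ₀ = (n : ℚ) := (hsymm R γ₀).trans hn
  have hBuu : B (A₀ - R) (A₀ - R) = 0 := by
    simp [map_sub, LinearMap.sub_apply, hAA, hRR, hAR, hRA]
    ring
  have huu : mukaiQ B ((1 : ℚ), A₀ - R, (1 : ℚ)) ((1 : ℚ), A₀ - R, (1 : ℚ)) = -2 := by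
    simp only [mukaiQ, hBuu]
    norm_num
  refine ⟨huu, ?_, ?_⟩
  · rintro p ⟨a, ha⟩ hv ⟨c, hc⟩
    obtain ⟨m, hm⟩ := hint p.2.1 hv (A₀ - R) (sub_mem hA₀ hR)
    have hq : (2 * mukaiQ B p ((1 : ℚ), A₀ - R, (1 : ℚ))) /
        mukaiQ B ((1 : ℚ), A₀ - R, (1 : ℚ)) ((1 : ℚ), A₀ - R, (1 : ℚ))
        = ((a + c - m : ℤ) : ℚ) := by
      rw [huu]
      simp only [mukaiQ, hm, ha, hc]
      push_cast
      ring
    refine ⟨⟨c - m, ?_⟩, ?_, ⟨a - m, ?_⟩⟩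
    · simp only [mukaiRefl, Prod.fst_add, Prod.fst_neg, Prod.smul_fst, hq, smul_eq_mul, ha]
      push_cast; ring
    · simp only [mukaiRefl, Prod.snd_add, Prod.snd_neg, Prod.smul_snd, Prod.fst_add,
        Prod.fst_neg, Prod.smul_fst, hq]
      refine add_mem (neg_mem hv) ?_
      rw [Int.cast_smul_eq_zsmul]
      exact zsmul_mem (sub_mem hA₀ hR) _
    · simp only [mukaiRefl, Prod.snd_add, Prod.snd_neg, Prod.smul_snd, hq, smul_eq_mul, hc]
      push_cast; ring
  · refine ⟨-2 * n, ?_, ?_⟩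
    · have hq : (2 * mukaiQ B ((0 : ℚ), γ₀, (0 : ℚ)) ((1 : ℚ), A₀ - R, (1 : ℚ))) /
          mukaiQ B ((1 : ℚ), A₀ - R, (1 : ℚ)) ((1 : ℚ), A₀ - R, (1 : ℚ)) = (n : ℚ) := by
        rw [huu]
        simp only [mukaiQ, map_sub, LinearMap.sub_apply, hγA, hn]
        ring
      simp only [mukaiRefl, hq, mukaiQ, Prod.fst_add, Prod.fst_neg, Prod.smul_fst,
        Prod.snd_add, Prod.snd_neg, Prod.smul_snd, smul_eq_mul]
      simp only [map_add, map_neg, map_smul, map_sub, LinearMap.add_apply,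
        LinearMap.neg_apply, LinearMap.smul_apply, LinearMap.sub_apply, smul_eq_mul,
        hAA, hRR, hAR, hRA, hAγ, hγA, hRγ, hn, hγγ]
      push_cast
      ring
    · intro h
      exact h5 n hn (by omega)
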